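/- Let R be an augmented ψ-ring and J a translation group of R. Then: (1) aug(j) = 0 for all j ∈ J; (2) j·j' = 0 for all j, j' ∈ J; (3) J is an ideal of R; (4) for every λ-line element L of R (a unit with ψ^n(L) = L^n for all n ≥ 1) and every j ∈ J, the element L + j is again a λ-line element, i.e. L + j is a unit of R and ψ^n(L+j) = (L+j)^n for all n ≥ 1; and (5) this translation action of J on the set of λ-line elements is free, i.e. L + j = L implies j = 0. -/

import Mathlib

/-!
STATEMENT 5: Let `R` be an augmented ψ-ring and `J` a translation group of
`R`.  Then (1) `aug j = 0` for `j ∈ J`; (2) `j·j' = 0` for `j, j' ∈ J`;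
(3) `J` is an ideal of `R`; (4) for every λ-line element `L` and `j ∈ J`,
`L + j` is again a λ-line element; (5) the translation action of `J` on the
set of λ-line elements is free.
-/

theorem translation_group_properties
    {R : Type*} [CommRing R]
    -- augmented ψ-ring structure
    (psi : ℕ → R →+* R) (aug : R →+* R)
    (hpsi1 : psi 1 = RingHom.id R)
    (hpsicomp : ∀ m n : ℕ, 1 ≤ m → 1 ≤ n → (psi m).comp (psi n) = psi (m * n))
    (haug : aug.comp aug = aug)
    (haugpsi : ∀ n : ℕ, 1 ≤ n → aug.comp (psi n) = aug)
    (hpsiaug : ∀ n : ℕ, 1 ≤ n → (psi n).comp aug = aug)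
    -- translation group axioms
    (J : AddSubgroup R)
    (hJ1 : ∀ n : ℕ, 1 ≤ n → ∀ j ∈ J, psi n j = n • j)
    (hJ2 : ∀ x : R, ∀ j ∈ J, x * j = aug x * j)
    (hJ3 : ∀ x : R, ∀ j ∈ J, aug x * j ∈ J) :
    (∀ j ∈ J, aug j = 0) ∧
    (∀ j ∈ J, ∀ j' ∈ J, j * j' = 0) ∧
    (∀ x : R, ∀ j ∈ J, x * j ∈ J) ∧
    (∀ L : R, IsUnit L → (∀ n : ℕ, 1 ≤ n → psi n L = L ^ n) →
      ∀ j ∈ J, IsUnit (L + j) ∧ ∀ n : ℕ, 1 ≤ n → psi n (L + j) = (L + j) ^ n) ∧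
    (∀ L : R, ∀ j ∈ J, L + j = L → j = 0) := by
  -- (1) aug vanishes on J
  have haug0 : ∀ j ∈ J, aug j = 0 := by
    intro j hj
    have h2 : aug (psi 2 j) = aug j := by
      have h := haugpsi 2 (by norm_num)
      have := congrArg (fun f : R →+* R => f j) h
      simpa using this
    rw [hJ1 2 (by norm_num) j hj, two_nsmul, map_add] at h2
    have : aug j + aug j = aug j + 0 := by rw [add_zero]; exact h2
    exact add_left_cancel this
  -- (2) products of elements of J vanish
  have hmul0 : ∀ j ∈ J, ∀ j' ∈ J, j * j' = 0 := by
    intro j hj j' hj'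
    rw [mul_comm, hJ2 j' j hj, haug0 j' hj', zero_mul]
  -- aug L = 1 for a λ-line element L
  have haugL : ∀ L : R, IsUnit L → (∀ n : ℕ, 1 ≤ n → psi n L = L ^ n) → aug L = 1 := by
    intro L hL hpsiL
    have h2 : aug (psi 2 L) = aug L := by
      have h := haugpsi 2 (by norm_num)
      have := congrArg (fun f : R →+* R => f L) h
      simpa using this
    rw [hpsiL 2 (by norm_num), map_pow, pow_two] at h2
    have hu : IsUnit (aug L) := hL.map aug
    have : aug L * aug L = aug L * 1 := by rw [mul_one]; exact h2
    exact hu.mul_left_cancel this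
  refine ⟨haug0, hmul0, ?_, ?_, ?_⟩
  · intro x j hj
    rw [hJ2 x j hj]
    exact hJ3 x j hj
  · intro L hL hpsiL j hj
    have haugL1 : aug L = 1 := haugL L hL hpsiL
    have hjj : j * j = 0 := hmul0 j hj j hj
    have hLpow : ∀ n : ℕ, L ^ n * j = j := by
      intro n
      rw [hJ2 (L ^ n) j hj, map_pow, haugL1, one_pow, one_mul]
    have hLj : L * j = j := by
      have := hLpow 1; rwa [pow_one] at this
    constructor
    · obtain ⟨u, hu⟩ := hL.exists_right_inv
      apply IsUnit.of_mul_eq_one (a := L + j) (u - u * u * j)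
      have key : (L + j) * (u - u * u * j) =
          L * u + (u * j) * (1 - L * u) - u * u * (j * j) := by ring
      rw [key, hu, hjj]
      ring
    · intro n hn
      have hpow : (L + j) ^ n = L ^ n + (n : R) * j := by
        induction n, hn using Nat.le_induction with
        | base => simp
        | succ n hn ih =>
          rw [pow_succ, ih]
          have expand : (L ^ n + (n : R) * j) * (L + j) =
              L ^ (n + 1) + (L * j) * (n : R) + L ^ n * j + (n : R) * (j * j) := by
            ring
          rw [expand, hjj, hLj, hLpow n]
          push_cast
          ring
      rw [map_add, hpsiL n hn, hJ1 n hn j hj, hpow, nsmul_eq_mul]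
  · intro L j hj h
    have : j = (L + j) - L := by ring
    rw [h, sub_self] at this
    exact this
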